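/- arXiv:1506.06515 — 4 statements merged into one kernel-verified Lean document; each statement's English description precedes it below -/
import Mathlib

section
/- Let 𝒢 be a sequence of covers with inverse limit (X,f), and suppose (X,f) is a Cantor system (X is homeomorphic to the Cantor set). For a walk or circuit w in G_m and n < m write E_n(w) := φ_{m,n}(E(w)) and V_n(w) := φ_{m,n}(V(w)) (images of the edge set and vertex set of w). Then the following seven conditions are mutually equivalent: (1) (X,f) is minimal; (2) for all n ∈ ℕ there exist N > n and l ≥ 1 such that for all m ≥ N and all w ∈ W(G_m,l), E_n(w) = E_n; (3) for all n ∈ ℕ there exist N > n and l ≥ 1 such that for all m ≥ N and all w ∈ W(G_m,l), V_n(w) = V_n; (4) for all n ∈ ℕ there exists N > n such that for all m ≥ N and all circuit graphs c ∈ 𝒞(G_m), E_n(c) = E_n; (5) for all n ∈ ℕ there exists N > n such that for all m ≥ N and all c ∈ 𝒞(G_m), V_n(c) = V_n; (6) for all n ∈ ℕ there exists N > n such that for every m ≥ N there exists l_m ≥ 1 such that for all w ∈ W(G_m,l_m), E_n(w) = E_n; (7) for all n ∈ ℕ there exists N > n such that for every m ≥ N there exists l_m ≥ 1 such that for all w ∈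 W(G_m,l_m), V_n(w) = V_n. -/
open Filter Topology MeasureTheory

/-- A (directed) graph on a vertex set `V`: an edge relation `E ⊆ V × V`
whose two coordinate projections are surjective. -/
structure DirGraph (V : Type) : Type where
  E : Set (V × V)
  surj_init : ∀ v : V, ∃ u : V, (v, u) ∈ E
  surj_term : ∀ v : V, ∃ u : V, (u, v) ∈ E

/-- A walk of length `l` in `G`. -/
def IsWalk {V : Type} (G : DirGraph V) (l : ℕ) (w : Fin (l + 1) → V) : Prop :=
  ∀ i : Fin l, (w i.castSucc, w i.succ) ∈ G.E

/-- The edge set of a walk. -/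
def walkEdges {V : Type} {l : ℕ} (w : Fin (l + 1) → V) : Set (V × V) :=
  {e | ∃ i : Fin l, e = (w i.castSucc, w i.succ)}

/-- `c` is the edge set of a circuit of `G`: a closed walk whose vertices are
pairwise distinct except that the initial and terminal vertices coincide. -/
def IsCircuitIn {V : Type} (G : DirGraph V) (c : Set (V × V)) : Prop :=
  ∃ l : ℕ, 0 < l ∧ ∃ w : Fin (l + 1) → V,
    IsWalk G l w ∧ w (Fin.last l) = w 0 ∧
    (∀ i j : Fin (l + 1), i < j → w i = w j → i = 0 ∧ j = Fin.last l) ∧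
    c = walkEdges w

/-- The set `𝒞(G)` of circuit graphs of `G` (a circuit graph is identified
with its edge set). -/
def circuitsOf {V : Type} (G : DirGraph V) : Set (Set (V × V)) :=
  {c | IsCircuitIn G c}

/-- The vertex set of a circuit graph (given by its edge set). -/
def circVerts {V : Type} (c : Set (V × V)) : Set V :=
  {v | ∃ e ∈ c, v = e.1 ∨ v = e.2}

/-- The element `Σ_{e ∈ E(c)} e` of the vector space with basis the edges,
associated with a circuit graph `c`. -/
noncomputable def circVec {V : Type} (c : Set (V × V)) : V × V → ℝ :=
  c.indicator fun _ => 1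

/-- `c̃ = (1/Per(c))·c` where `Per(c)` is the number of edges of `c`. -/
noncomputable def circTilde {V : Type} (c : Set (V × V)) : V × V → ℝ :=
  fun e => ((Set.ncard c : ℝ))⁻¹ * circVec c e

/-- Membership in `ℳ(G)`: nonnegative coefficients supported on the edges. -/
def MemM {V : Type} [Fintype V] (G : DirGraph V) (a : V × V → ℝ) : Prop :=
  (∀ e, 0 ≤ a e) ∧ ∀ e, e ∉ G.E → a e = 0

/-- Membership in `ℐ(G)`: at every vertex the incoming coefficient sum equals
the outgoing coefficient sum. -/
def MemI {V : Type} [Fintype V] (G : DirGraph V) (a : V × V → ℝ) : Prop :=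
  MemM G a ∧ ∀ v : V, (∑ u : V, a (u, v)) = ∑ u : V, a (v, u)

/-- Membership in `𝒫(G)`: elements of `ℐ(G)` of total mass `1`. -/
def MemP {V : Type} [Fintype V] (G : DirGraph V) (a : V × V → ℝ) : Prop :=
  MemI G a ∧ (∑ e : V × V, a e) = 1

/-- The action of a map on edges. -/
def edgeMap {V₁ V₂ : Type} (ψ : V₁ → V₂) (e : V₁ × V₁) : V₂ × V₂ := (ψ e.1, ψ e.2)

/-- `ψ : G₁ → G₂` is a cover: an edge-surjective, positive-directional
graph homomorphism. -/
structure IsCover {V₁ V₂ : Type} (G₁ : DirGraph V₁) (G₂ : DirGraph V₂) (ψ : V₁ → V₂) : Prop where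
  hom : ∀ u v : V₁, (u, v) ∈ G₁.E → (ψ u, ψ v) ∈ G₂.E
  edgeSurj : ∀ e ∈ G₂.E, ∃ u v : V₁, (u, v) ∈ G₁.E ∧ (ψ u, ψ v) = e
  posDir : ∀ u v v' : V₁, (u, v) ∈ G₁.E → (u, v') ∈ G₁.E → ψ v = ψ v'

/-- The induced linear map `ψ_*` on edge vectors: the coefficient of an edge `e`
of the target is the sum of the coefficients of its preimages. -/
noncomputable def pushVec {V₁ V₂ : Type} (ψ : V₁ → V₂) (a : V₁ × V₁ → ℝ) : V₂ × V₂ → ℝ :=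
  fun e => ∑ᶠ e' ∈ {e' : V₁ × V₁ | edgeMap ψ e' = e}, a e'

/-- Euclidean distance on finite-dimensional coordinate spaces. -/
noncomputable def dE {ι : Type} [Fintype ι] (a b : ι → ℝ) : ℝ :=
  Real.sqrt (∑ i : ι, (a i - b i) ^ 2)

/-- A sequence of covers `G₀ ← G₁ ← G₂ ← ⋯` of finite graphs, with `G₀`
the one-vertex graph (with a single loop). -/
structure CoverSystem : Type 1 where
  V : ℕ → Type
  fintypeV : ∀ n, Fintype (V n)
  G : ∀ n, DirGraph (V n)
  φ : ∀ n, V (n + 1) → V n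
  cover : ∀ n, IsCover (G (n + 1)) (G n) (φ n)
  V0_single : ∀ x y : V 0, x = y

namespace CoverSystem

instance (S : CoverSystem) (n : ℕ) : Fintype (S.V n) := S.fintypeV n
instance (S : CoverSystem) (n : ℕ) : TopologicalSpace (S.V n) := ⊥
instance (S : CoverSystem) (n : ℕ) : DiscreteTopology (S.V n) := ⟨rfl⟩

/-- `φ_{n+k, n}` as a composition of the covering maps. -/
def phiIter (S : CoverSystem) (n : ℕ) : ∀ k : ℕ, S.V (n + k) → S.V n
  | 0 => fun v => v
  | k + 1 => fun v => S.phiIter n k (S.φ (n + k) v)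

/-- `φ_{m,n} : V m → V n` for `n ≤ m`. -/
def phiLE (S : CoverSystem) {m n : ℕ} (h : n ≤ m) (v : S.V m) : S.V n :=
  S.phiIter n (m - n) (cast (congrArg S.V (Nat.add_sub_cancel' h).symm) v)

/-- The inverse limit space `X` of the sequence of covers. -/
def X (S : CoverSystem) : Type :=
  { x : ∀ n, S.V n // ∀ n, S.φ n (x (n + 1)) = x n }

instance (S : CoverSystem) : TopologicalSpace S.X :=
  inferInstanceAs (TopologicalSpace { x : ∀ n, S.V n // ∀ n, S.φ n (x (n + 1)) = x n })

instance (S : CoverSystem) : MeasurableSpace S.X := borel S.X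
instance (S : CoverSystem) : BorelSpace S.X := ⟨rfl⟩

/-- The projection `φ_{∞,n} : X → V n`. -/
def proj (S : CoverSystem) (x : S.X) (n : ℕ) : S.V n := Subtype.val x n

/-- `f` is the shift map of the inverse limit: it is compatible with all the
edge relations (this determines `f` uniquely). -/
def IsLimitMap (S : CoverSystem) (f : S.X → S.X) : Prop :=
  ∀ (x : S.X) (n : ℕ), (S.proj x n, S.proj (f x) n) ∈ (S.G n).E

/-- `U(v) = φ_{∞,n}⁻¹(v)`. -/
def USet (S : CoverSystem) {n : ℕ} (v : S.V n) : Set S.X := {x | S.proj x n = v}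

/-- `U(e) = U(u) ∩ f⁻¹(U(v))` for an edge `e = (u,v)`. -/
def UEdge (S : CoverSystem) (f : S.X → S.X) {n : ℕ} (e : S.V n × S.V n) : Set S.X :=
  {x | S.proj x n = e.1 ∧ S.proj (f x) n = e.2}

/-- `μ` is an `f`-invariant Borel measure. -/
def Invariant (S : CoverSystem) (f : S.X → S.X) (μ : Measure S.X) : Prop :=
  ∀ B : Set S.X, MeasurableSet B → μ (f ⁻¹' B) = μ B

/-- `μ` is ergodic: every invariant Borel set is null or conull. -/
def ErgodicM (S : CoverSystem) (f : S.X → S.X) (μ : Measure S.X) : Prop :=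
  ∀ B : Set S.X, MeasurableSet B → f ⁻¹' B = B → μ B = 0 ∨ μ B = 1

/-- The vector `μ_n = Σ_{e ∈ E_n} μ(U(e))·e ∈ Δ_n` of a measure `μ`. -/
noncomputable def muVec (S : CoverSystem) (f : S.X → S.X) (μ : Measure S.X) (n : ℕ) :
    S.V n × S.V n → ℝ :=
  fun e => (μ (S.UEdge f e)).toReal

/-- `Δ_∞`: compatible sequences of elements of the simplices `Δ_n = 𝒫(G_n)`. -/
def DeltaInf (S : CoverSystem) : Set (∀ n, S.V n × S.V n → ℝ) :=
  {x | (∀ n, MemP (S.G n) (x n)) ∧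
    ∀ m n : ℕ, ∀ h : n ≤ m, pushVec (S.phiLE h) (x m) = x n}

/-- `C` is a system of circuits enumerated by `N'`. -/
def IsCircuitSystem (S : CoverSystem) (N' : Set ℕ)
    (C : ∀ n, Set (Set (S.V n × S.V n))) : Prop :=
  ∀ n ∈ N', C n ⊆ circuitsOf (S.G n)

/-- The system of circuits `C` expresses the measure `μ`. -/
def Expresses (S : CoverSystem) (f : S.X → S.X) (μ : Measure S.X)
    (N' : Set ℕ) (C : ∀ n, Set (Set (S.V n × S.V n))) : Prop :=
  ∀ n ∈ N', ∃ s : Set (S.V n × S.V n) → ℝ,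
    (∀ c ∈ C n, 0 ≤ s c) ∧ ∀ e, S.muVec f μ n e = ∑ᶠ c ∈ C n, s c * circTilde c e

/-- The system of circuits `C` expresses every ergodic invariant Borel
probability measure. -/
def ExpressesAllErgodic (S : CoverSystem) (f : S.X → S.X)
    (N' : Set ℕ) (C : ∀ n, Set (Set (S.V n × S.V n))) : Prop :=
  ∀ μ : Measure S.X, IsProbabilityMeasure μ → S.Invariant f μ → S.ErgodicM f μ →
    S.Expresses f μ N' C

/-- `𝒞̄_∞`: the set of limit sequences of sequences of circuits chosen from `C`. -/
def limitsOf (S : CoverSystem) (N' : Set ℕ)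
    (C : ∀ n, Set (Set (S.V n × S.V n))) : Set (∀ m, S.V m × S.V m → ℝ) :=
  {y | ∃ c : ∀ n, Set (S.V n × S.V n), (∀ n ∈ N', c n ∈ C n) ∧
    ∀ m : ℕ, Filter.Tendsto
      (fun n : ℕ => if h : m ≤ n then dE (pushVec (S.phiLE h) (circTilde (c n))) (y m) else 1)
      (Filter.atTop ⊓ Filter.principal N') (nhds 0)}

end CoverSystem

section AuxPhi
variable (S : CoverSystem)

lemma phiIter_cast {n k k' : ℕ} (hk : k = k') (h : S.V (n+k) = S.V (n+k')) (v : S.V (n+k)) :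
    S.phiIter n k' (cast h v) = S.phiIter n k v := by subst hk; rfl

lemma phiLE_eq {n m d : ℕ} (hm : m = n + d) (h : n ≤ m) (v : S.V m) :
    S.phiLE h v = S.phiIter n d (cast (congrArg S.V hm) v) := by
  subst hm
  unfold CoverSystem.phiLE
  rw [← phiIter_cast S (show n + d - n = d by omega) (by rw [show n + d - n = d by omega])]
  rw [cast_cast]

lemma phiLE_self {m : ℕ} (h : m ≤ m) (v : S.V m) : S.phiLE h v = v := by
  rw [phiLE_eq S (d := 0) rfl h]
  rfl

lemma phiLE_top {n m : ℕ} (h : n ≤ m + 1) (h' : n ≤ m) (v : S.V (m+1)) :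
    S.phiLE h v = S.phiLE h' (S.φ m v) := by
  obtain ⟨d, rfl⟩ : ∃ d, m = n + d := ⟨m - n, (Nat.add_sub_cancel' h').symm⟩
  rw [phiLE_eq S (d := d + 1) rfl h, phiLE_eq S (d := d) rfl h']
  rfl

end AuxPhi
section AuxPhi2
variable (S : CoverSystem)

lemma phiLE_bot {n m : ℕ} (h : n + 1 ≤ m) (h' : n ≤ m) (v : S.V m) :
    S.φ n (S.phiLE h v) = S.phiLE h' v := by
  induction m, h using Nat.le_induction with
  | base => rw [phiLE_self, phiLE_top S h' (by omega)]; rw [phiLE_self]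
  | succ m hm ih =>
      rw [phiLE_top S _ hm, phiLE_top S h' (by omega), ih (by omega)]

lemma phiLE_comp {n k m : ℕ} (h1 : k ≤ m) (h2 : n ≤ k) (h3 : n ≤ m) (v : S.V m) :
    S.phiLE h2 (S.phiLE h1 v) = S.phiLE h3 v := by
  induction m, h1 using Nat.le_induction with
  | base => rw [phiLE_self]
  | succ m hm ih =>
      rw [phiLE_top S _ hm, phiLE_top S h3 (by omega), ih (by omega)]

lemma phiLE_hom {n m : ℕ} (h : n ≤ m) {u v : S.V m} (he : (u, v) ∈ (S.G m).E) :
    (S.phiLE h u, S.phiLE h v) ∈ (S.G n).E := by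
  induction m, h using Nat.le_induction with
  | base => rw [phiLE_self, phiLE_self]; exact he
  | succ m hm ih =>
      rw [phiLE_top S _ hm, phiLE_top S _ hm]
      exact ih ((S.cover m).hom u v he)

/-- compatibility of points of `X` with the maps `phiLE`. -/
lemma proj_phiLE {n m : ℕ} (h : n ≤ m) (x : S.X) :
    S.phiLE h (S.proj x m) = S.proj x n := by
  induction m, h using Nat.le_induction with
  | base => rw [phiLE_self]
  | succ m hm ih =>
      rw [phiLE_top S _ hm]
      have : S.φ m (S.proj x (m+1)) = S.proj x m := x.2 m
      rw [this, ih]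

end AuxPhi2
section AuxPoint
variable (S : CoverSystem)

lemma phi_surj (n : ℕ) : Function.Surjective (S.φ n) := by
  intro v
  obtain ⟨u, hu⟩ := (S.G n).surj_init v
  obtain ⟨a, b, -, hab⟩ := (S.cover n).edgeSurj (v, u) hu
  exact ⟨a, congrArg Prod.fst hab⟩

noncomputable def secMap (n : ℕ) : S.V n → S.V (n + 1) := fun v => (phi_surj S n v).choose

lemma secMap_spec (n : ℕ) (v : S.V n) : S.φ n (secMap S n v) = v := (phi_surj S n v).choose_spec

noncomputable def chain (m : ℕ) (v : S.V m) : ∀ k, S.V (m + k)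
  | 0 => v
  | k + 1 => secMap S (m + k) (chain m v k)

lemma chain_proj (m : ℕ) (v : S.V m) (k : ℕ) (h : m ≤ m + k) :
    S.phiLE h (chain S m v k) = v := by
  induction k with
  | zero => exact phiLE_self S h v
  | succ k ih =>
      have h' : m ≤ m + k := by omega
      calc S.phiLE h (chain S m v (k+1))
          = S.phiLE h' (S.φ (m+k) (secMap S (m+k) (chain S m v k))) := phiLE_top S h h' _
        _ = v := by rw [secMap_spec]; exact ih h'

noncomputable def pointThrough (m : ℕ) (v : S.V m) : S.X :=
  ⟨fun k => S.phiLE (Nat.le_add_left k m) (chain S m v k), by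
    intro k
    have h2 : k ≤ m + (k+1) := by omega
    have h3 : k ≤ m + k := by omega
    calc S.φ k (S.phiLE (Nat.le_add_left (k+1) m) (chain S m v (k+1)))
        = S.phiLE h2 (chain S m v (k+1)) := phiLE_bot S _ h2 _
      _ = S.phiLE h3 (S.φ (m+k) (secMap S (m+k) (chain S m v k))) := phiLE_top S h2 h3 _
      _ = S.phiLE h3 (chain S m v k) := by rw [secMap_spec]
      _ = S.phiLE (Nat.le_add_left k m) (chain S m v k) := rfl⟩

lemma pointThrough_proj (m : ℕ) (v : S.V m) : S.proj (pointThrough S m v) m = v :=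
  chain_proj S m v m (Nat.le_add_left m m)

lemma proj_surj (m : ℕ) : Function.Surjective fun x : S.X => S.proj x m :=
  fun v => ⟨pointThrough S m v, pointThrough_proj S m v⟩

end AuxPoint
section AuxF
variable (S : CoverSystem) (f : S.X → S.X)

lemma proj_f (hf : S.IsLimitMap f) {k : ℕ} (x : S.X) {v : S.V (k+1)}
    (hv : (S.proj x (k+1), v) ∈ (S.G (k+1)).E) :
    S.proj (f x) k = S.φ k v := by
  have h1 := hf x (k+1)
  have h2 := (S.cover k).posDir _ _ _ h1 hv
  rw [← h2]
  exact ((f x).2 k).symm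

lemma continuous_proj (n : ℕ) : Continuous fun x : S.X => S.proj x n :=
  (continuous_apply n).comp continuous_subtype_val

lemma continuous_limit_map (hf : S.IsLimitMap f) : Continuous f := by
  have key : ∀ k, Continuous fun x : S.X => S.proj (f x) k := by
    intro k
    have : (fun x : S.X => S.proj (f x) k)
        = (fun u : S.V (k+1) => S.φ k ((S.G (k+1)).surj_init u).choose)
          ∘ (fun x : S.X => S.proj x (k+1)) := by
      funext x
      exact proj_f S f hf x ((S.G (k+1)).surj_init (S.proj x (k+1))).choose_spec
    rw [this]
    exact Continuous.comp continuous_of_discreteTopology (continuous_proj S (k+1))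
  exact Continuous.subtype_mk (continuous_pi key) _

/-- The itinerary of a point through a walk: if `x` projects to the start of a
walk `w` at level `m`, then the orbit of `x` projects along the walk. -/
lemma itinerary (hf : S.IsLimitMap f) {m l : ℕ} (w : Fin (l+1) → S.V m)
    (hw : IsWalk (S.G m) l w) (x : S.X) (hx : S.proj x m = w 0) :
    ∀ (i k : ℕ) (hi : i ≤ l) (hk : k + i ≤ m),
      S.proj (f^[i] x) k = S.phiLE (by omega) (w ⟨i, by omega⟩) := by
  intro i
  induction i with
  | zero =>
      intro k hi hk
      simp only [Function.iterate_zero_apply]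
      have h0 : (⟨0, by omega⟩ : Fin (l+1)) = 0 := Fin.mk_zero
      rw [h0, ← hx, proj_phiLE]
  | succ i ih =>
      intro k hi hk
      have hik : (k+1) + i ≤ m := by omega
      have hy : S.proj (f^[i] x) (k+1) = S.phiLE (by omega) (w ⟨i, by omega⟩) :=
        ih (k+1) (by omega) hik
      have hedge : (w ⟨i, by omega⟩, w ⟨i+1, by omega⟩) ∈ (S.G m).E := by
        exact hw ⟨i, by omega⟩
      have hedge2 : (S.phiLE (show k+1 ≤ m by omega) (w ⟨i, by omega⟩),
          S.phiLE (show k+1 ≤ m by omega) (w ⟨i+1, by omega⟩)) ∈ (S.G (k+1)).E :=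
        phiLE_hom S _ hedge
      rw [← hy] at hedge2
      rw [Function.iterate_succ_apply']
      rw [proj_f S f hf _ hedge2]
      exact phiLE_bot S _ _ _

end AuxF
section AuxWalk

variable {V₁ V₂ V : Type}

lemma isWalk_comp {G₁ : DirGraph V₁} {G₂ : DirGraph V₂} {ψ : V₁ → V₂}
    (hψ : ∀ u v : V₁, (u, v) ∈ G₁.E → (ψ u, ψ v) ∈ G₂.E) {l : ℕ} {w : Fin (l+1) → V₁}
    (hw : IsWalk G₁ l w) : IsWalk G₂ l (ψ ∘ w) := fun i => hψ _ _ (hw i)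

lemma walkEdges_comp (ψ : V₁ → V₂) {l : ℕ} (w : Fin (l+1) → V₁) :
    walkEdges (ψ ∘ w) = edgeMap ψ '' walkEdges w := by
  ext e
  constructor
  · rintro ⟨i, rfl⟩
    exact ⟨(w i.castSucc, w i.succ), ⟨i, rfl⟩, rfl⟩
  · rintro ⟨e', ⟨i, rfl⟩, rfl⟩
    exact ⟨i, rfl⟩

lemma walkEdges_subset {G : DirGraph V} {l : ℕ} {w : Fin (l+1) → V}
    (hw : IsWalk G l w) : walkEdges w ⊆ G.E := by
  rintro e ⟨i, rfl⟩
  exact hw i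

lemma vertexCover_of_edgeCover {G₂ : DirGraph V₂} (ψ : V₁ → V₂) {l : ℕ}
    (w : Fin (l+1) → V₁) (h : edgeMap ψ '' walkEdges w = G₂.E) :
    ψ '' Set.range w = Set.univ := by
  ext v
  simp only [Set.mem_univ, iff_true]
  obtain ⟨u, hu⟩ := G₂.surj_init v
  have hmem : (v, u) ∈ edgeMap ψ '' walkEdges w := h ▸ hu
  obtain ⟨e', ⟨i, rfl⟩, he⟩ := hmem
  exact ⟨w i.castSucc, ⟨i.castSucc, rfl⟩, congrArg Prod.fst he⟩

lemma circuit_subset {G : DirGraph V} {c : Set (V × V)} (hc : IsCircuitIn G c) :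
    c ⊆ G.E := by
  obtain ⟨l, hl, w, hw, -, -, rfl⟩ := hc
  exact walkEdges_subset hw

lemma circuit_exists_source {G : DirGraph V} {c : Set (V × V)} (hc : IsCircuitIn G c) :
    ∀ v ∈ circVerts c, ∃ u, (v, u) ∈ c := by
  obtain ⟨l, hl, w, hw, hcl, -, rfl⟩ := hc
  rintro v ⟨e, ⟨i, rfl⟩, hv⟩
  -- every vertex of the walk of the form `w j` is the source of an edge
  have key : ∀ j : Fin (l+1), ∃ i' : Fin l, w i'.castSucc = w j := by
    intro j
    by_cases hj : j.val < l
    · exact ⟨⟨j.val, hj⟩, congrArg w (Fin.ext (by simp))⟩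
    · have hj' : j = Fin.last l := Fin.ext (by have := j.isLt; simp; omega)
      refine ⟨⟨0, hl⟩, ?_⟩
      rw [hj', hcl]
      exact congrArg w (Fin.ext (by simp))
  rcases hv with hv | hv
  · exact ⟨w i.succ, ⟨i, by rw [hv]⟩⟩
  · obtain ⟨i', hi'⟩ := key i.succ
    exact ⟨w i'.succ, ⟨i', by rw [hv, ← hi']⟩⟩

end AuxWalk
section AuxCirc

variable {V : Type}

/-- Unrolling a circuit into a walk of arbitrary length. -/
lemma exists_walk_of_circuit {G : DirGraph V} {c : Set (V × V)} (hc : IsCircuitIn G c)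
    (l' : ℕ) : ∃ w : Fin (l'+1) → V, IsWalk G l' w ∧ walkEdges w ⊆ c := by
  obtain ⟨l, hl, w, hw, hcl, -, rfl⟩ := hc
  set W : Fin (l'+1) → V := fun j => w ⟨j.val % l, by have := Nat.mod_lt j.val hl; omega⟩
    with hW
  have key : ∀ i : Fin l',
      (W i.castSucc, W i.succ)
        = (w (⟨i.val % l, Nat.mod_lt i.val hl⟩ : Fin l).castSucc,
           w (⟨i.val % l, Nat.mod_lt i.val hl⟩ : Fin l).succ) := by
    intro i
    have hr : i.val % l < l := Nat.mod_lt i.val hl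
    have hfst : W i.castSucc = w (⟨i.val % l, hr⟩ : Fin l).castSucc := by
      apply congrArg w
      apply Fin.ext
      simp
    have hsnd : W i.succ = w (⟨i.val % l, hr⟩ : Fin l).succ := by
      have hmod : (i.val % l + 1) % l = (i.val + 1) % l := Nat.mod_add_mod i.val l 1
      by_cases hcase : i.val % l + 1 = l
      · -- wrap around : `(i+1) % l = 0` and the circuit closes up
        have h0 : (i.val + 1) % l = 0 := by
          rw [← hmod, hcase, Nat.mod_self]
        have hWs : W i.succ = w 0 := by
          apply congrArg w
          apply Fin.ext
          simp [h0]
        have hlast : (⟨i.val % l, hr⟩ : Fin l).succ = Fin.last l := by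
          apply Fin.ext
          simp [hcase]
        rw [hWs, hlast, hcl]
      · have h1 : (i.val + 1) % l = i.val % l + 1 := by
          rw [← hmod]
          exact Nat.mod_eq_of_lt (by omega)
        apply congrArg w
        apply Fin.ext
        simp [h1]
    rw [hfst, hsnd]
  refine ⟨W, ?_, ?_⟩
  · intro i
    rw [show (W i.castSucc, W i.succ) = _ from key i]
    exact hw _
  · rintro e ⟨i, rfl⟩
    exact ⟨⟨i.val % l, Nat.mod_lt i.val hl⟩, key i⟩

/-- Any sufficiently long walk in a finite graph contains a circuit. -/
lemma exists_circuit_in_walk [Fintype V] {G : DirGraph V} {l : ℕ}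
    (hl : Fintype.card V < l + 1) {w : Fin (l+1) → V} (hw : IsWalk G l w) :
    ∃ c, IsCircuitIn G c ∧ c ⊆ walkEdges w := by
  obtain ⟨a, b, hab, hwab⟩ := Fintype.exists_ne_map_eq_of_card_lt w (by simpa using hl)
  have hP : ∃ d, 0 < d ∧ ∃ i j : Fin (l+1), i.val + d = j.val ∧ w i = w j := by
    rcases lt_or_gt_of_ne (fun h : a = b => hab h) with h | h
    · exact ⟨b.val - a.val, by omega, a, b, by omega, hwab⟩
    · exact ⟨a.val - b.val, by omega, b, a, by omega, hwab.symm⟩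
  classical
  set d₀ := Nat.find hP with hd₀
  obtain ⟨hd₀pos, i, j, hij, hwij⟩ := Nat.find_spec hP
  have hjl : i.val + d₀ ≤ l := by have := j.isLt; omega
  set u : Fin (d₀+1) → V := fun t => w ⟨i.val + t.val, by have := t.isLt; omega⟩ with hu
  have ukey : ∀ t : Fin d₀,
      (u t.castSucc, u t.succ)
        = (w (⟨i.val + t.val, by have := t.isLt; omega⟩ : Fin l).castSucc,
           w (⟨i.val + t.val, by have := t.isLt; omega⟩ : Fin l).succ) := by
    intro t
    constructor <;>
      · apply congrArg w
        apply Fin.ext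
        simp
  have huwalk : IsWalk G d₀ u := by
    intro t
    rw [show (u t.castSucc, u t.succ) = _ from ukey t]
    exact hw _
  refine ⟨walkEdges u, ⟨d₀, hd₀pos, u, huwalk, ?_, ?_, rfl⟩, ?_⟩
  · -- closed
    have h1 : u (Fin.last d₀) = w j := by
      apply congrArg w
      apply Fin.ext
      simp [hij, hd₀]
    have h2 : u 0 = w i := by
      apply congrArg w
      apply Fin.ext
      simp
    rw [h1, h2, hwij]
  · -- distinctness
    intro s t hst hust
    have hd : 0 < t.val - s.val := by
      have := Fin.lt_iff_val_lt_val.mp hst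
      omega
    have hPd : 0 < t.val - s.val ∧ ∃ i' j' : Fin (l+1),
        i'.val + (t.val - s.val) = j'.val ∧ w i' = w j' := by
      refine ⟨hd, ⟨i.val + s.val, by have := s.isLt; omega⟩,
        ⟨i.val + t.val, by have := t.isLt; omega⟩, by simp; omega, ?_⟩
      simpa [hu] using hust
    have hmin : d₀ ≤ t.val - s.val := Nat.find_min' hP ⟨hd, hPd.2⟩
    have hs0 : s.val = 0 := by have := t.isLt; omega
    have htl : t.val = d₀ := by have := t.isLt; omega
    exact ⟨Fin.ext (by simp [hs0]), Fin.ext (by simp [htl])⟩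
  · rintro e ⟨t, rfl⟩
    exact ⟨⟨i.val + t.val, by have := t.isLt; omega⟩, ukey t⟩

end AuxCirc
section AuxReturn
variable (S : CoverSystem) (f : S.X → S.X)

lemma return_bound (hc : CompactSpace S.X) (ht : T2Space S.X)
    (hcont : Continuous f)
    (hmin : ∀ Y : Set S.X, IsClosed Y → Y.Nonempty → f '' Y = Y → Y = Set.univ)
    (U : Set S.X) (hU : IsOpen U) (hne : U.Nonempty) :
    ∃ L, ∀ x : S.X, ∃ i ≤ L, f^[i] x ∈ U := by
  set A := ⋃ i : ℕ, f^[i] ⁻¹' U with hA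
  have hAopen : IsOpen A := isOpen_iUnion fun i => hU.preimage (hcont.iterate i)
  have hZclosed : IsClosed Aᶜ := hAopen.isClosed_compl
  have hmaps : ∀ x ∈ Aᶜ, f x ∈ Aᶜ := by
    intro x hx hfx
    apply hx
    obtain ⟨s, ⟨i, rfl⟩, hs⟩ := hfx
    exact Set.mem_iUnion.mpr ⟨i + 1, by simpa [Function.iterate_succ_apply] using hs⟩
  have himg : f '' Aᶜ ⊆ Aᶜ := by
    rintro y ⟨x, hx, rfl⟩
    exact hmaps x hx
  have hAuniv : A = Set.univ := by
    by_contra hAne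
    have hZne : (Aᶜ : Set S.X).Nonempty := by
      rcases Set.eq_empty_or_nonempty Aᶜ with h | h
      · exact absurd (by simpa [Set.compl_empty_iff] using h) hAne
      · exact h
    set Z : ℕ → Set S.X := fun k => f^[k] '' Aᶜ with hZ
    have hZcompact : ∀ k, IsCompact (Z k) :=
      fun k => (hZclosed.isCompact).image (hcont.iterate k)
    have hZclosed' : ∀ k, IsClosed (Z k) := fun k => (hZcompact k).isClosed
    have hZne' : ∀ k, (Z k).Nonempty := fun k => hZne.image _
    have hZdec : ∀ k, Z (k + 1) ⊆ Z k := by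
      intro k
      have : f^[k+1] '' Aᶜ = f^[k] '' (f '' Aᶜ) := by
        rw [← Set.image_comp, ← Function.iterate_succ]
      show f^[k+1] '' Aᶜ ⊆ f^[k] '' Aᶜ
      rw [this]
      exact Set.image_mono himg
    have hZdec' : ∀ k, f '' Z k ⊆ Z k := by
      intro k
      have h1 : f '' Z k = f^[k+1] '' Aᶜ := by
        show f '' (f^[k] '' Aᶜ) = _
        rw [← Set.image_comp, ← Function.iterate_succ']
      rw [h1]
      exact hZdec k
    set Y := ⋂ k, Z k with hY
    have hYne : Y.Nonempty :=
      IsCompact.nonempty_iInter_of_sequence_nonempty_isCompact_isClosed Z hZdec hZne'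
        (hZcompact 0) hZclosed'
    have hYclosed : IsClosed Y := isClosed_iInter hZclosed'
    have hYinv : f '' Y = Y := by
      apply Set.Subset.antisymm
      · rintro y ⟨x, hx, rfl⟩
        apply Set.mem_iInter.mpr
        intro k
        exact hZdec' k ⟨x, Set.mem_iInter.mp hx k, rfl⟩
      · intro y hy
        have hCne : ∀ k, (f ⁻¹' {y} ∩ Z k).Nonempty := by
          intro k
          have : y ∈ f '' Z k := by
            have h1 : f '' Z k = f^[k+1] '' Aᶜ := by
              show f '' (f^[k] '' Aᶜ) = _
              rw [← Set.image_comp, ← Function.iterate_succ']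
            rw [h1]
            exact Set.mem_iInter.mp hy (k+1)
          obtain ⟨z, hz, hzy⟩ := this
          exact ⟨z, hzy, hz⟩
        have hCcl : ∀ k, IsClosed (f ⁻¹' {y} ∩ Z k) :=
          fun k => (isClosed_singleton.preimage hcont).inter (hZclosed' k)
        have hCdec : ∀ k, f ⁻¹' {y} ∩ Z (k+1) ⊆ f ⁻¹' {y} ∩ Z k :=
          fun k => Set.inter_subset_inter_right _ (hZdec k)
        have hCcomp : IsCompact (f ⁻¹' {y} ∩ Z 0) := (hCcl 0).isCompact
        obtain ⟨z, hz⟩ :=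
          IsCompact.nonempty_iInter_of_sequence_nonempty_isCompact_isClosed
            (fun k => f ⁻¹' {y} ∩ Z k) hCdec hCne hCcomp hCcl
        refine ⟨z, ?_, (Set.mem_iInter.mp hz 0).1⟩
        exact Set.mem_iInter.mpr fun k => (Set.mem_iInter.mp hz k).2
    have hYuniv : Y = Set.univ := hmin Y hYclosed hYne hYinv
    obtain ⟨x₀, hx₀⟩ := hne
    have hx₀Y : x₀ ∈ Y := hYuniv ▸ Set.mem_univ x₀
    have hx₀Z : x₀ ∈ Aᶜ := by
      have := Set.mem_iInter.mp hx₀Y 0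
      simpa [hZ] using this
    exact hx₀Z (Set.mem_iUnion.mpr ⟨0, by simpa using hx₀⟩)
  -- extract a finite subcover
  obtain ⟨t, ht'⟩ := IsCompact.elim_finite_subcover isCompact_univ
    (fun i : ℕ => f^[i] ⁻¹' U) (fun i => hU.preimage (hcont.iterate i))
    (by rw [← hA, hAuniv])
  refine ⟨t.sup id, fun x => ?_⟩
  obtain ⟨i, hi, hxi⟩ := Set.mem_iUnion₂.mp (ht' (Set.mem_univ x))
  exact ⟨i, Finset.le_sup (f := id) hi, hxi⟩

end AuxReturn
/-- Characterizations of minimality of a Cantor system given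
as the inverse limit of a sequence of graph covers. -/
theorem minimal_tfae_graph_covers (S : CoverSystem) (f : S.X → S.X)
    (hf : S.IsLimitMap f) (hCantor : Nonempty (S.X ≃ₜ (ℕ → Bool))) :
    List.TFAE
      [ (∀ Y : Set S.X, IsClosed Y → Y.Nonempty → f '' Y = Y → Y = Set.univ),
        (∀ n : ℕ, ∃ N, n < N ∧ ∃ l, 0 < l ∧ ∀ m, N ≤ m → ∀ h : n ≤ m,
          ∀ w : Fin (l + 1) → S.V m, IsWalk (S.G m) l w →
            edgeMap (S.phiLE h) '' walkEdges w = (S.G n).E),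
        (∀ n : ℕ, ∃ N, n < N ∧ ∃ l, 0 < l ∧ ∀ m, N ≤ m → ∀ h : n ≤ m,
          ∀ w : Fin (l + 1) → S.V m, IsWalk (S.G m) l w →
            S.phiLE h '' Set.range w = Set.univ),
        (∀ n : ℕ, ∃ N, n < N ∧ ∀ m, N ≤ m → ∀ h : n ≤ m,
          ∀ c ∈ circuitsOf (S.G m), edgeMap (S.phiLE h) '' c = (S.G n).E),
        (∀ n : ℕ, ∃ N, n < N ∧ ∀ m, N ≤ m → ∀ h : n ≤ m,
          ∀ c ∈ circuitsOf (S.G m), S.phiLE h '' circVerts c = Set.univ),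
        (∀ n : ℕ, ∃ N, n < N ∧ ∀ m, N ≤ m → ∀ h : n ≤ m, ∃ l, 0 < l ∧
          ∀ w : Fin (l + 1) → S.V m, IsWalk (S.G m) l w →
            edgeMap (S.phiLE h) '' walkEdges w = (S.G n).E),
        (∀ n : ℕ, ∃ N, n < N ∧ ∀ m, N ≤ m → ∀ h : n ≤ m, ∃ l, 0 < l ∧
          ∀ w : Fin (l + 1) → S.V m, IsWalk (S.G m) l w →
            S.phiLE h '' Set.range w = Set.univ) ] := by
  have hcomp : CompactSpace S.X := hCantor.some.symm.compactSpace
  have ht2 : T2Space S.X := hCantor.some.isEmbedding.t2Space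
  have hcont : Continuous f := continuous_limit_map S f hf
  -- cylinder sets form a neighbourhood basis
  have hcyl : ∀ (O : Set S.X), IsOpen O → ∀ x ∈ O,
      ∃ n, ∀ y : S.X, S.proj y n = S.proj x n → y ∈ O := by
    intro O hO x hx
    obtain ⟨O', hO', rfl⟩ := isOpen_induced_iff.mp hO
    obtain ⟨I, u, h1, h2⟩ := isOpen_pi_iff.mp hO' x.val hx
    refine ⟨I.sup id, fun y hy => ?_⟩
    apply h2
    intro i hi
    have hile : i ≤ I.sup id := Finset.le_sup (f := id) hi
    have : y.val i = x.val i := by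
      show S.proj y i = S.proj x i
      rw [← proj_phiLE S hile y, ← proj_phiLE S hile x]
      exact congrArg _ hy
    rw [this]
    exact (h1 i hi).2
  tfae_have 1 → 2 := by
    intro hmin n
    -- bounded return times to each edge set `U(e)`
    have hU : ∀ e ∈ (S.G n).E, ∃ L, ∀ x : S.X, ∃ i ≤ L, f^[i] x ∈ S.UEdge f e := by
      intro e he
      apply return_bound S f hcomp ht2 hcont hmin
      · have : S.UEdge f e
            = (fun x : S.X => S.proj x n) ⁻¹' {e.1}
              ∩ (fun x : S.X => S.proj (f x) n) ⁻¹' {e.2} := by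
          ext x; simp [CoverSystem.UEdge, Set.mem_preimage]
        rw [this]
        exact ((isOpen_discrete _).preimage (continuous_proj S n)).inter
          ((isOpen_discrete _).preimage ((continuous_proj S n).comp hcont))
      · obtain ⟨a, b, hab, heq⟩ := (S.cover n).edgeSurj e he
        refine ⟨pointThrough S (n+1) a, ?_, ?_⟩
        · have h1 : S.proj (pointThrough S (n+1) a) n
              = S.φ n (S.proj (pointThrough S (n+1) a) (n+1)) :=
            ((pointThrough S (n+1) a).2 n).symm
          rw [h1, pointThrough_proj]
          exact congrArg Prod.fst heq
        · have h2 : S.proj (f (pointThrough S (n+1) a)) n = S.φ n b := by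
            apply proj_f S f hf
            rw [pointThrough_proj]
            exact hab
          rw [h2]
          exact congrArg Prod.snd heq
    choose! L hL using hU
    classical
    set Lm := Finset.univ.sup (fun e : S.V n × S.V n => L e) with hLm
    have hLm' : ∀ e ∈ (S.G n).E, ∀ x : S.X, ∃ i ≤ Lm, f^[i] x ∈ S.UEdge f e := by
      intro e he x
      obtain ⟨i, hi, hmem⟩ := hL e he x
      exact ⟨i, le_trans hi (Finset.le_sup (Finset.mem_univ e)), hmem⟩
    refine ⟨n + (Lm + 1), by omega, Lm + 1, by omega, ?_⟩
    intro m hm h w hw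
    set x := pointThrough S m (w 0) with hxdef
    have hx : S.proj x m = w 0 := pointThrough_proj S m (w 0)
    have hit := itinerary S f hf w hw x hx
    apply Set.Subset.antisymm
    · rintro e' ⟨e, ⟨i, rfl⟩, rfl⟩
      exact phiLE_hom S h (hw i)
    · intro e he
      obtain ⟨i, hi, hmem⟩ := hLm' e he x
      have h1 : S.proj (f^[i] x) n = S.phiLE h (w ⟨i, by omega⟩) := by
        rw [hit i n (by omega) (by omega)]
      have h2 : S.proj (f^[i+1] x) n = S.phiLE h (w ⟨i+1, by omega⟩) := by
        rw [hit (i+1) n (by omega) (by omega)]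
      obtain ⟨hm1, hm2⟩ := hmem
      rw [h1] at hm1
      rw [← Function.iterate_succ_apply' f i x, h2] at hm2
      refine ⟨(w ⟨i, by omega⟩, w ⟨i+1, by omega⟩), ⟨⟨i, by omega⟩, ?_⟩, ?_⟩
      · rw [Fin.castSucc_mk, Fin.succ_mk]
      · show (S.phiLE h _, S.phiLE h _) = e
        rw [hm1, hm2]
  tfae_have 2 → 3 := by
    intro h2 n
    obtain ⟨N, hN, l, hl, H⟩ := h2 n
    exact ⟨N, hN, l, hl, fun m hm h w hw =>
      vertexCover_of_edgeCover (S.phiLE h) w (H m hm h w hw)⟩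
  tfae_have 3 → 1 := by
    intro h3 Y hYcl hYne hYinv
    have hforward : ∀ i : ℕ, ∀ y ∈ Y, f^[i] y ∈ Y := by
      intro i
      induction i with
      | zero => exact fun y hy => hy
      | succ i ih =>
          intro y hy
          rw [Function.iterate_succ_apply' f i y]
          exact hYinv ▸ Set.mem_image_of_mem f (ih y hy)
    ext x
    simp only [Set.mem_univ, iff_true]
    rw [← hYcl.closure_eq]
    apply mem_closure_iff.mpr
    intro O hO hxO
    obtain ⟨n, hn⟩ := hcyl O hO x hxO
    obtain ⟨N, hN, l, hl, H⟩ := h3 n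
    obtain ⟨z, hz⟩ := hYne
    set w : Fin (l+1) → S.V N := fun i => S.proj (f^[i.val] z) N with hwdef
    have hw : IsWalk (S.G N) l w := by
      intro i
      show (S.proj (f^[i.castSucc.val] z) N, S.proj (f^[i.succ.val] z) N) ∈ (S.G N).E
      simp only [Fin.coe_castSucc, Fin.val_succ]
      rw [Function.iterate_succ_apply' f i.val z]
      exact hf (f^[i.val] z) N
    have hcov := H N le_rfl (le_of_lt hN) w hw
    have hxmem : S.proj x n ∈ S.phiLE (le_of_lt hN) '' Set.range w := by
      rw [hcov]; exact Set.mem_univ _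
    obtain ⟨-, ⟨i, rfl⟩, hi⟩ := hxmem
    refine ⟨f^[i.val] z, ?_, hforward i.val z hz⟩
    apply hn
    rw [← hi, proj_phiLE]
  tfae_have 2 → 4 := by
    intro h2 n
    obtain ⟨N, hN, l, hl, H⟩ := h2 n
    refine ⟨N, hN, fun m hm h c hc => ?_⟩
    obtain ⟨w, hw, hsub⟩ := exists_walk_of_circuit hc l
    apply Set.Subset.antisymm
    · rintro e' ⟨⟨e1, e2⟩, hec, rfl⟩
      exact phiLE_hom S h (circuit_subset hc hec)
    · rw [← H m hm h w hw]
      exact Set.image_mono hsub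
  tfae_have 4 → 5 := by
    intro h4 n
    obtain ⟨N, hN, H⟩ := h4 n
    refine ⟨N, hN, fun m hm h c hc => ?_⟩
    have hE := H m hm h c hc
    ext v
    simp only [Set.mem_univ, iff_true]
    obtain ⟨u, hu⟩ := (S.G n).surj_init v
    rw [← hE] at hu
    obtain ⟨e, hec, hee⟩ := hu
    exact ⟨e.1, ⟨e, hec, Or.inl rfl⟩, congrArg Prod.fst hee⟩
  tfae_have 5 → 4 := by
    intro h5 n
    obtain ⟨N, hN, H⟩ := h5 (n+1)
    refine ⟨N, by omega, fun m hm h c hc => ?_⟩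
    have hn1 : n + 1 ≤ m := le_trans (le_of_lt hN) hm
    apply Set.Subset.antisymm
    · rintro e' ⟨⟨e1, e2⟩, hec, rfl⟩
      exact phiLE_hom S h (circuit_subset hc hec)
    · intro e he
      obtain ⟨a', b', hab, heq⟩ := (S.cover n).edgeSurj e he
      have hVcov := H m hm hn1 c hc
      have ha' : a' ∈ S.phiLE hn1 '' circVerts c := by
        rw [hVcov]; exact Set.mem_univ _
      obtain ⟨v, hv, hva⟩ := ha'
      obtain ⟨u, hvu⟩ := circuit_exists_source hc v hv
      have hedge : (S.phiLE hn1 v, S.phiLE hn1 u) ∈ (S.G (n+1)).E :=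
        phiLE_hom S hn1 (circuit_subset hc hvu)
      rw [hva] at hedge
      have hpd := (S.cover n).posDir a' b' (S.phiLE hn1 u) hab hedge
      refine ⟨(v, u), hvu, ?_⟩
      show (S.phiLE h v, S.phiLE h u) = e
      have hv1 : S.phiLE h v = S.φ n (S.phiLE hn1 v) := (phiLE_bot S hn1 h v).symm
      have hu1 : S.phiLE h u = S.φ n (S.phiLE hn1 u) := (phiLE_bot S hn1 h u).symm
      rw [hv1, hu1, hva, ← hpd]
      exact heq
  tfae_have 4 → 6 := by
    intro h4 n
    obtain ⟨N, hN, H⟩ := h4 n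
    refine ⟨N, hN, fun m hm h => ⟨Fintype.card (S.V m) + 1, by omega, fun w hw => ?_⟩⟩
    obtain ⟨c, hc, hsub⟩ := exists_circuit_in_walk (by omega) hw
    apply Set.Subset.antisymm
    · rintro e' ⟨e, hec, rfl⟩
      obtain ⟨e1, e2⟩ := e
      exact phiLE_hom S h (walkEdges_subset hw hec)
    · rw [← H m hm h c hc]
      exact Set.image_mono hsub
  tfae_have 6 → 7 := by
    intro h6 n
    obtain ⟨N, hN, H⟩ := h6 n
    refine ⟨N, hN, fun m hm h => ?_⟩
    obtain ⟨l, hl, H'⟩ := H m hm h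
    exact ⟨l, hl, fun w hw => vertexCover_of_edgeCover (S.phiLE h) w (H' w hw)⟩
  tfae_have 7 → 3 := by
    intro h7 n
    obtain ⟨N, hN, H⟩ := h7 n
    obtain ⟨l, hl, H'⟩ := H N le_rfl (le_of_lt hN)
    refine ⟨N, hN, l, hl, fun m hm h w hw => ?_⟩
    set w' : Fin (l+1) → S.V N := (S.phiLE hm) ∘ w with hw'def
    have hw' : IsWalk (S.G N) l w' :=
      isWalk_comp (fun u v huv => phiLE_hom S hm huv) hw
    have hcov := H' w' hw'
    rw [hw'def, Set.range_comp, Set.image_image] at hcov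
    have : (fun v => S.phiLE (le_of_lt hN) (S.phiLE hm v)) = S.phiLE h :=
      funext fun v => phiLE_comp S hm (le_of_lt hN) h v
    rw [this] at hcov
    exact hcov
  tfae_finish
end

section
/- Let 𝒢 be a sequence of covers, n ∈ ℕ and l ≥ 1. Then for every m ≥ n + l and every vertex v ∈ V_m, the image φ_{m,n}(W_v(G_m,l)) of the set of walks of length l in G_m starting at v consists of exactly one walk in G_n. -/
open Filter Topology MeasureTheory

section Aux

/-- Every vertex is the initial vertex of a walk of any length. -/
lemma exists_walk_aux {V : Type} (G : DirGraph V) (l : ℕ) (v : V) :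
    ∃ w : Fin (l + 1) → V, IsWalk G l w ∧ w 0 = v := by
  let f : ℕ → V := fun i => Nat.rec v (fun _ u => Classical.choose (G.surj_init u)) i
  refine ⟨fun i => f i.val, fun i => ?_, rfl⟩
  exact Classical.choose_spec (G.surj_init (f i.val))

/-- A cover maps walks to walks. -/
lemma cover_walk {V₁ V₂ : Type} {G₁ : DirGraph V₁} {G₂ : DirGraph V₂} {ψ : V₁ → V₂}
    (hc : IsCover G₁ G₂ ψ) {l : ℕ} {w : Fin (l + 1) → V₁} (hw : IsWalk G₁ l w) :
    IsWalk G₂ l (ψ ∘ w) := fun i => hc.hom _ _ (hw i)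

/-- Positive-directionality: one application of a cover improves agreement of
two walks by one step. -/
lemma cover_step {V₁ V₂ : Type} {G₁ : DirGraph V₁} {G₂ : DirGraph V₂} {ψ : V₁ → V₂}
    (hc : IsCover G₁ G₂ ψ) {l : ℕ} {w w' : Fin (l + 1) → V₁}
    (hw : IsWalk G₁ l w) (hw' : IsWalk G₁ l w') (j : ℕ)
    (hag : ∀ i : Fin (l + 1), (i : ℕ) ≤ j → w i = w' i) :
    ∀ i : Fin (l + 1), (i : ℕ) ≤ j + 1 → ψ (w i) = ψ (w' i) := by
  intro i hi
  rcases Nat.lt_or_ge (i : ℕ) (j + 1) with h | h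
  · rw [hag i (Nat.lt_succ_iff.mp h)]
  · have hij : (i : ℕ) = j + 1 := le_antisymm hi h
    have hjl : j < l := by have := i.isLt; omega
    set p : Fin l := ⟨j, hjl⟩ with hp
    have hic : i = p.succ := Fin.ext (by simp [hp, hij])
    have h1 := hw p
    have h2 := hw' p
    have heq : w p.castSucc = w' p.castSucc := hag p.castSucc (by simp [hp])
    rw [← heq] at h2
    rw [hic]
    exact hc.posDir _ _ _ h1 h2

lemma phiIter_agree (S : CoverSystem) (n l : ℕ) :
    ∀ k j (w w' : Fin (l + 1) → S.V (n + k)),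
      IsWalk (S.G (n + k)) l w → IsWalk (S.G (n + k)) l w' →
      (∀ i : Fin (l + 1), (i : ℕ) ≤ j → w i = w' i) →
      ∀ i : Fin (l + 1), (i : ℕ) ≤ j + k →
        S.phiIter n k (w i) = S.phiIter n k (w' i) := by
  intro k
  induction k with
  | zero => intro j w w' _ _ hag i hi; exact hag i (by omega)
  | succ k ih =>
    intro j w w' hw hw' hag i hi
    have hstep := cover_step (S.cover (n + k)) hw hw' j hag
    exact ih (j + 1) (S.φ (n + k) ∘ w) (S.φ (n + k) ∘ w')
      (cover_walk (S.cover (n + k)) hw) (cover_walk (S.cover (n + k)) hw')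
      hstep i (by omega)

lemma phiLE_eq_phiIter (S : CoverSystem) (n k : ℕ) (h : n ≤ n + k) (v : S.V (n + k)) :
    S.phiLE h v = S.phiIter n k v := by
  have key : ∀ (j : ℕ) (hj : n + k = n + j) (v : S.V (n + k)),
      S.phiIter n j (cast (congrArg S.V hj) v) = S.phiIter n k v := by
    intro j hj v
    have hjk : j = k := by omega
    subst hjk
    simp
  show S.phiIter n (n + k - n) (cast (congrArg S.V (Nat.add_sub_cancel' h).symm) v) = S.phiIter n k v
  exact key (n + k - n) (Nat.add_sub_cancel' h).symm v

end Aux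

/-- For `m ≥ n + l` and `v ∈ V_m`, the image
`φ_{m,n}(W_v(G_m,l))` consists of exactly one walk. -/
theorem image_of_walks_is_singleton (S : CoverSystem) (n l : ℕ) (hl : 0 < l)
    (m : ℕ) (hm : n + l ≤ m) (v : S.V m) :
    ∃! w' : Fin (l + 1) → S.V n,
      ∃ w : Fin (l + 1) → S.V m, IsWalk (S.G m) l w ∧ w 0 = v ∧
        w' = S.phiLE (le_trans (Nat.le_add_right n l) hm) ∘ w := by
  obtain ⟨k, rfl⟩ := Nat.exists_eq_add_of_le (le_trans (Nat.le_add_right n l) hm)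
  obtain ⟨w₀, hw₀, hv₀⟩ := exists_walk_aux (S.G (n + k)) l v
  refine ⟨S.phiLE (le_trans (Nat.le_add_right n l) hm) ∘ w₀, ⟨w₀, hw₀, hv₀, rfl⟩, ?_⟩
  rintro w' ⟨w₂, hw₂, hv₂, rfl⟩
  funext i
  simp only [Function.comp_apply]
  rw [phiLE_eq_phiIter, phiLE_eq_phiIter]
  refine phiIter_agree S n l k 0 w₂ w₀ hw₂ hw₀ ?_ i ?_
  · intro i hi
    have : i = 0 := Fin.ext (by simp only [Fin.val_zero]; omega)
    rw [this, hv₂, hv₀]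
  · have := i.isLt; omega
end

section
/- Let 𝒢 be a sequence of covers with inverse limit (X,f). Let n ∈ ℕ, l ≥ 1 and m ≥ n + l. Then every walk w ∈ φ_{m,n}(W(G_m,l)) is ∞-projective, i.e. there exists x ∈ X with w = (φ_{∞,n}(x), φ_{∞,n}(f(x)), …, φ_{∞,n}(f^l(x))). -/
open Filter Topology MeasureTheory

namespace CoverSystem

lemma cast_phi (S : CoverSystem) {p q : ℕ} (h : p = q) (hs : S.V (p+1) = S.V (q+1))
    (h' : S.V p = S.V q) (v : S.V (p+1)) :
    S.φ q (cast hs v) = cast h' (S.φ p v) := by subst h; rfl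

lemma phiIter_cast (S : CoverSystem) (j : ℕ) {a b : ℕ} (h : a = b)
    (hc : S.V (j+a) = S.V (j+b)) (v : S.V (j+a)) :
    S.phiIter j b (cast hc v) = S.phiIter j a v := by subst h; rfl

lemma phiIter_heq (S : CoverSystem) (j : ℕ) {k k' : ℕ} (hk : k = k')
    {u : S.V (j+k)} {u' : S.V (j+k')} (hu : HEq u u') :
    S.phiIter j k u = S.phiIter j k' u' := by
  subst hk; rw [eq_of_heq hu]

lemma phiLE_as_iter' (S : CoverSystem) {m j k : ℕ} (hm : m = j + k) (h : j ≤ m) (v : S.V m) :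
    S.phiLE h v = S.phiIter j k (cast (congrArg S.V hm) v) := by
  subst hm
  calc S.phiLE h v
      = S.phiIter j (j + k - j)
        (cast (congrArg S.V (Nat.add_sub_cancel' h).symm) v) := rfl
    _ = S.phiIter j k v := S.phiIter_cast j (by omega) _ v
    _ = S.phiIter j k (cast (congrArg S.V (rfl : j + k = j + k)) v) := rfl

lemma phi_phiIter (S : CoverSystem) (j : ℕ) : ∀ (b : ℕ) (v : S.V (j+1+b))
    (hc : S.V (j+1+b) = S.V (j+(b+1))),
    S.φ j (S.phiIter (j+1) b v) = S.phiIter j (b+1) (cast hc v)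
  | 0, v, hc => rfl
  | b+1, v, hc => by
    have hb : j+1+b = j+(b+1) := by omega
    calc S.φ j (S.phiIter (j+1) (b+1) v)
        = S.φ j (S.phiIter (j+1) b (S.φ (j+1+b) v)) := rfl
      _ = S.phiIter j (b+1) (cast (congrArg S.V hb) (S.φ (j+1+b) v)) :=
          phi_phiIter S j b _ _
      _ = S.phiIter j (b+1) (S.φ (j+(b+1)) (cast hc v)) := by
          rw [S.cast_phi hb hc (congrArg S.V hb) v]
      _ = S.phiIter j (b+1+1) (cast hc v) := rfl

lemma proj_phiIter (S : CoverSystem) (x : S.X) (j : ℕ) :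
    ∀ k, S.proj x j = S.phiIter j k (S.proj x (j+k))
  | 0 => rfl
  | k+1 => by
    have h : S.φ (j+k) (S.proj x (j+k+1)) = S.proj x (j+k) := x.2 (j+k)
    calc S.proj x j = S.phiIter j k (S.proj x (j+k)) := S.proj_phiIter x j k
      _ = S.phiIter j k (S.φ (j+k) (S.proj x (j+k+1))) := by rw [h]
      _ = S.phiIter j (k+1) (S.proj x (j+(k+1))) := rfl

lemma proj_phiLE (S : CoverSystem) (x : S.X) {j m : ℕ} (h : j ≤ m) :
    S.proj x j = S.phiLE h (S.proj x m) := by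
  obtain ⟨k, rfl⟩ := Nat.exists_eq_add_of_le h
  rw [S.phiLE_as_iter' rfl h]
  exact S.proj_phiIter x j k

lemma edge_phiIter (S : CoverSystem) (j : ℕ) : ∀ k (u v : S.V (j+k)),
    (u,v) ∈ (S.G (j+k)).E → (S.phiIter j k u, S.phiIter j k v) ∈ (S.G j).E
  | 0, u, v, h => h
  | k+1, u, v, h => S.edge_phiIter j k _ _ ((S.cover (j+k)).hom u v h)

lemma edge_phiLE (S : CoverSystem) {j m : ℕ} (h : j ≤ m) {u v : S.V m}
    (he : (u,v) ∈ (S.G m).E) :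
    (S.phiLE h u, S.phiLE h v) ∈ (S.G j).E := by
  obtain ⟨k, rfl⟩ := Nat.exists_eq_add_of_le h
  rw [S.phiLE_as_iter' rfl h u, S.phiLE_as_iter' rfl h v]
  exact S.edge_phiIter j k u v he

lemma phi_phiLE (S : CoverSystem) {j m : ℕ} (h1 : j+1 ≤ m) (h0 : j ≤ m) (v : S.V m) :
    S.φ j (S.phiLE h1 v) = S.phiLE h0 v := by
  obtain ⟨k, rfl⟩ := Nat.exists_eq_add_of_le h1
  rw [S.phiLE_as_iter' rfl h1 v, S.phiLE_as_iter' (show j+1+k = j+(k+1) by omega) h0 v]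
  exact S.phi_phiIter j k _ _

lemma exists_point (S : CoverSystem) (m : ℕ) (v : S.V m) :
    ∃ x : S.X, S.proj x m = v := by
  have pre : ∀ j (u : S.V j), ∃ u' : S.V (j+1), S.φ j u' = u := by
    intro j u
    obtain ⟨t, ht⟩ := (S.G j).surj_init u
    obtain ⟨a, b, hab, hfab⟩ := (S.cover j).edgeSurj (u, t) ht
    exact ⟨a, congrArg Prod.fst hfab⟩
  choose F hF using pre
  let g : ∀ k, S.V (m + k) := fun k =>
    Nat.rec (motive := fun k => S.V (m+k)) v (fun k gk => F (m+k) gk) k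
  have hg : ∀ k, S.φ (m+k) (g (k+1)) = g k := fun k => hF (m+k) (g k)
  let xs : ∀ j, S.V j := fun j =>
    S.phiIter j m (cast (congrArg S.V (Nat.add_comm m j)) (g j))
  have hxs : ∀ j, S.φ j (xs (j+1)) = xs j := by
    intro j
    have hnum : m + (j+1) = j + (m+1) := by omega
    have step1 : S.φ j (xs (j+1)) = S.phiIter j (m+1) (cast (congrArg S.V hnum) (g (j+1))) := by
      refine (S.phi_phiIter j m _ (congrArg S.V (by omega))).trans ?_
      exact S.phiIter_heq j rfl
        (((cast_heq _ _).trans (cast_heq _ _)).trans (cast_heq _ _).symm)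
    rw [step1]
    show S.phiIter j m (S.φ (j+m) (cast (congrArg S.V hnum) (g (j+1)))) = _
    rw [S.cast_phi (Nat.add_comm m j) (congrArg S.V hnum)
      (congrArg S.V (Nat.add_comm m j)) (g (j+1)), hg j]
  refine ⟨⟨xs, hxs⟩, ?_⟩
  have chain : ∀ k, S.phiIter m k (g k) = v := by
    intro k
    induction k with
    | zero => rfl
    | succ k ih =>
      calc S.phiIter m (k+1) (g (k+1)) = S.phiIter m k (S.φ (m+k) (g (k+1))) := rfl
        _ = S.phiIter m k (g k) := by rw [hg k]
        _ = v := ih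
  exact chain m

end CoverSystem

/-- For `m ≥ n + l`, every walk in `φ_{m,n}(W(G_m,l))` is
`∞`-projective: it is the projection of a real orbit of the inverse limit. -/
theorem image_walk_is_infty_projective (S : CoverSystem) (f : S.X → S.X)
    (hf : S.IsLimitMap f) (n l m : ℕ) (hl : 0 < l) (hm : n + l ≤ m)
    (w : Fin (l + 1) → S.V m) (hw : IsWalk (S.G m) l w) :
    ∃ x : S.X, ∀ i : Fin (l + 1),
      S.phiLE (le_trans (Nat.le_add_right n l) hm) (w i) = S.proj (f^[i.1] x) n := by
  obtain ⟨x, hx⟩ := S.exists_point m (w 0)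
  have key : ∀ i : ℕ, ∀ hil : i ≤ l, ∀ j : ℕ, ∀ hj : j + i ≤ m,
      S.proj (f^[i] x) j = S.phiLE (by omega : j ≤ m) (w ⟨i, by omega⟩) := by
    intro i
    induction i with
    | zero =>
      intro _ j hj
      have h0 : (⟨0, by omega⟩ : Fin (l+1)) = 0 := Fin.ext (by simp)
      rw [h0, ← hx]
      simpa using S.proj_phiLE x (by omega : j ≤ m)
    | succ i ih =>
      intro hil j hj
      have e1 := ih (by omega) (j+1) (by omega)
      have hedge := hf (f^[i] x) (j+1)
      have hwedge : (w ⟨i, by omega⟩, w ⟨i+1, by omega⟩) ∈ (S.G m).E := hw ⟨i, by omega⟩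
      have hedge2 := S.edge_phiLE (show j+1 ≤ m by omega) hwedge
      rw [Function.iterate_succ_apply']
      rw [e1] at hedge
      have hpos := (S.cover j).posDir _ _ _ hedge hedge2
      have hptop : S.φ j (S.proj (f (f^[i] x)) (j+1)) = S.proj (f (f^[i] x)) j :=
        (f (f^[i] x)).2 j
      rw [← hptop, hpos]
      exact S.phi_phiLE (by omega) (by omega) _
  refine ⟨x, ?_⟩
  intro i
  have hkey := key i.1 (by omega) n (by omega)
  have hi : (⟨i.1, by omega⟩ : Fin (l+1)) = i := Fin.ext rfl
  rw [hi] at hkey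
  exact hkey.symm
end

section
/- Let G = (V,E) be a graph and x ∈ ℐ(G). Then there exist nonnegative real numbers s(c) ≥ 0, c ∈ 𝒞(G), such that x = Σ_{c∈𝒞(G)} s(c)·c. -/
open Filter Topology MeasureTheory

lemma inj_cast {V : Type} {l : ℕ} (w : Fin (l + 1) → V)
    (hinj : ∀ i j : Fin (l + 1), i < j → w i = w j → i = 0 ∧ j = Fin.last l) :
    Function.Injective (fun k : Fin l => w k.castSucc) := by
  intro a b h
  by_contra hne
  rcases lt_or_gt_of_ne hne with hlt | hlt
  · exact absurd (hinj _ _ (by exact_mod_cast hlt) h).2 (Fin.castSucc_lt_last b).ne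
  · exact absurd (hinj _ _ (by exact_mod_cast hlt) h.symm).2 (Fin.castSucc_lt_last a).ne

lemma inj_succ {V : Type} {l : ℕ} (w : Fin (l + 1) → V)
    (hinj : ∀ i j : Fin (l + 1), i < j → w i = w j → i = 0 ∧ j = Fin.last l) :
    Function.Injective (fun k : Fin l => w k.succ) := by
  intro a b h
  by_contra hne
  rcases lt_or_gt_of_ne hne with hlt | hlt
  · exact absurd (hinj _ _ (Fin.succ_lt_succ_iff.mpr hlt) h).1 (Fin.succ_ne_zero a)
  · exact absurd (hinj _ _ (Fin.succ_lt_succ_iff.mpr hlt) h.symm).1 (Fin.succ_ne_zero b)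

lemma step_eq {V : Type} {l : ℕ} [NeZero l] (w : Fin (l + 1) → V)
    (hcyc : w (Fin.last l) = w 0) (k : Fin l) :
    w (Fin.castSucc (k + 1)) = w (Fin.succ k) := by
  have hk := k.isLt
  have hlp := Nat.pos_of_neZero l
  have hv : ((k + 1 : Fin l) : ℕ) = if k.val + 1 = l then 0 else k.val + 1 := by
    rw [Fin.val_add_eq_ite, Fin.val_one']
    rcases Nat.lt_or_ge 1 l with h1 | h1
    · rw [Nat.mod_eq_of_lt h1]
      split_ifs <;> omega
    · have hl1 : l = 1 := le_antisymm h1 hlp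
      subst hl1
      have hk0 : (k : ℕ) = 0 := by omega
      simp [hk0]
  rcases Nat.lt_or_ge (k.val + 1) l with h | h
  · apply congrArg
    apply Fin.ext
    simp [hv, Nat.ne_of_lt h]
  · have he : k.val + 1 = l := by omega
    have h0 : (k + 1 : Fin l) = 0 := Fin.ext (by simp [hv, he])
    have hlast : Fin.succ k = Fin.last l := Fin.ext (by simp [Fin.val_succ, he])
    rw [h0, hlast, hcyc]
    simp

lemma circ_flow {V : Type} [Fintype V] {l : ℕ} (hl : 0 < l) (w : Fin (l + 1) → V)
    (hcyc : w (Fin.last l) = w 0)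
    (hinj : ∀ i j : Fin (l + 1), i < j → w i = w j → i = 0 ∧ j = Fin.last l) (v : V) :
    (∑ u : V, circVec (walkEdges w) (u, v)) = ∑ u : V, circVec (walkEdges w) (v, u) := by
  classical
  have hic := inj_cast w hinj
  have hisucc := inj_succ w hinj
  have hin : (∑ u : V, circVec (walkEdges w) (u, v))
      = ∑ k : Fin l, (if w k.succ = v then (1:ℝ) else 0) := by
    rw [show (∑ u : V, circVec (walkEdges w) (u, v))
        = ∑ u : V, (if (u, v) ∈ walkEdges w then (1:ℝ) else 0) from
      Finset.sum_congr rfl fun u _ => by simp [circVec, Set.indicator_apply]]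
    rw [Finset.sum_boole, Finset.sum_boole]
    congr 1
    rw [Finset.card_bij (fun (k : Fin l) (hk : k ∈ Finset.univ.filter fun k => w k.succ = v) => w k.castSucc)]
    · intro k hk
      simp only [Finset.mem_filter, Finset.mem_univ, true_and] at hk ⊢
      exact ⟨k, by rw [hk]⟩
    · intro a ha b hb h
      exact hic h
    · intro u hu
      simp only [Finset.mem_filter, Finset.mem_univ, true_and] at hu
      obtain ⟨k, hk⟩ := hu
      obtain ⟨h1, h2⟩ := Prod.mk.injEq .. ▸ hk
      exact ⟨k, by simp [h2.symm], h1.symm⟩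
  have hout : (∑ u : V, circVec (walkEdges w) (v, u))
      = ∑ k : Fin l, (if w k.castSucc = v then (1:ℝ) else 0) := by
    rw [show (∑ u : V, circVec (walkEdges w) (v, u))
        = ∑ u : V, (if (v, u) ∈ walkEdges w then (1:ℝ) else 0) from
      Finset.sum_congr rfl fun u _ => by simp [circVec, Set.indicator_apply]]
    rw [Finset.sum_boole, Finset.sum_boole]
    congr 1
    rw [Finset.card_bij (fun (k : Fin l) (hk : k ∈ Finset.univ.filter fun k => w k.castSucc = v) => w k.succ)]
    · intro k hk
      simp only [Finset.mem_filter, Finset.mem_univ, true_and] at hk ⊢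
      exact ⟨k, by rw [hk]⟩
    · intro a ha b hb h
      exact hisucc h
    · intro u hu
      simp only [Finset.mem_filter, Finset.mem_univ, true_and] at hu
      obtain ⟨k, hk⟩ := hu
      obtain ⟨h1, h2⟩ := Prod.mk.injEq .. ▸ hk
      exact ⟨k, by simp [h1.symm], h2.symm⟩
  rw [hin, hout]
  have : NeZero l := ⟨hl.ne'⟩
  rw [← Equiv.sum_comp (Equiv.addRight (1 : Fin l))
    (fun k : Fin l => if w k.castSucc = v then (1:ℝ) else 0)]
  refine Finset.sum_congr rfl fun k _ => ?_
  simp only [Equiv.coe_addRight]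
  exact congrArg (fun a => if a = v then (1:ℝ) else 0) (step_eq w hcyc k).symm

private lemma exists_circuit_pos {V : Type} [Fintype V] (G : DirGraph V) (x : V × V → ℝ)
    (hx : MemI G x) (hne : ¬ ∀ e, x e = 0) :
    ∃ c, IsCircuitIn G c ∧ ∀ e ∈ c, 0 < x e := by
  classical
  push_neg at hne
  obtain ⟨e₀, he₀⟩ := hne
  have hpos0 : 0 < x e₀ := lt_of_le_of_ne (hx.1.1 e₀) (Ne.symm he₀)
  set P : V → Prop := fun v => ∃ u, 0 < x (v, u) with hP
  set next : V → V := fun v => if h : P v then h.choose else v with hnext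
  have next_spec : ∀ v, P v → 0 < x (v, next v) := by
    intro v hv
    simp only [hnext, dif_pos hv]
    exact hv.choose_spec
  have next_closed : ∀ v, P v → P (next v) := by
    intro v hv
    have h1 : 0 < ∑ u : V, x (u, next v) :=
      lt_of_lt_of_le (next_spec v hv)
        (Finset.single_le_sum (fun u _ => hx.1.1 (u, next v)) (Finset.mem_univ v))
    rw [hx.2 (next v)] at h1
    obtain ⟨u, hu⟩ := Finset.exists_lt_of_sum_lt (by simpa using h1 :
      (∑ _u : V, (0:ℝ)) < ∑ u : V, x (next v, u))
    exact ⟨u, hu.2⟩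
  set u : ℕ → V := fun k => next^[k] e₀.1 with hu
  have hPall : ∀ k, P (u k) := by
    intro k
    induction k with
    | zero => exact ⟨e₀.2, hpos0⟩
    | succ k ih =>
      have : u (k+1) = next (u k) := Function.iterate_succ_apply' next k e₀.1
      rw [this]
      exact next_closed _ ih
  have hstep : ∀ k, 0 < x (u k, u (k + 1)) := by
    intro k
    have : u (k+1) = next (u k) := Function.iterate_succ_apply' next k e₀.1
    rw [this]
    exact next_spec _ (hPall k)
  -- pigeonhole
  have hrep : ∃ m, ∃ i < m, u i = u m := by
    obtain ⟨i, j, hne, hij⟩ := Finite.exists_ne_map_eq_of_infinite u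
    rcases lt_or_gt_of_ne hne with h | h
    · exact ⟨j, i, h, hij⟩
    · exact ⟨i, j, h, hij.symm⟩
  set j := Nat.find hrep with hj
  obtain ⟨i, hij, hui⟩ := Nat.find_spec hrep
  have hmin : ∀ m < j, ¬ ∃ i < m, u i = u m := fun m hm => Nat.find_min hrep hm
  set l := j - i with hl
  have hl0 : 0 < l := by omega
  set w : Fin (l + 1) → V := fun k => u (i + k.val) with hw
  have hcyc : w (Fin.last l) = w 0 := by
    simp only [hw, Fin.val_last, Fin.val_zero, Nat.add_zero]
    rw [show i + l = j by omega]
    exact hui.symm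
  have hwinj : ∀ a b : Fin (l + 1), a < b → w a = w b → a = 0 ∧ b = Fin.last l := by
    intro a b hab heq
    simp only [hw] at heq
    have hab' : (a : ℕ) < b := hab
    have hb : i + (b : ℕ) ≤ j := by
      have := b.isLt
      omega
    have hbj : i + (b : ℕ) = j := by
      by_contra hne'
      exact hmin (i + b) (by omega) ⟨i + a, by omega, heq⟩
    have ha0 : (a : ℕ) = 0 := by
      by_contra hne'
      have : i < i + (a : ℕ) := by omega
      exact hmin (i + a) (by omega) ⟨i, this, by rw [heq, hbj, hui]⟩
    constructor
    · exact Fin.ext ha0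
    · exact Fin.ext (by simp [Fin.val_last]; omega)
  have hedge : ∀ k : Fin l, (w k.castSucc, w k.succ) = (u (i + k.val), u (i + k.val + 1)) := by
    intro k
    simp only [hw, Fin.coe_castSucc, Fin.val_succ]
    rw [Nat.add_assoc]
  refine ⟨walkEdges w, ⟨l, hl0, w, ?_, hcyc, hwinj, rfl⟩, ?_⟩
  · intro k
    rw [hedge k]
    by_contra hE
    exact absurd (hx.1.2 _ hE) (hstep (i + k.val)).ne'
  · rintro e ⟨k, rfl⟩
    rw [hedge k]
    exact hstep (i + k.val)

private lemma decomp_aux {V : Type} [Fintype V] (G : DirGraph V) :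
    ∀ (n : ℕ) (x : V × V → ℝ), MemI G x →
      (Finset.univ.filter fun e => x e ≠ 0).card ≤ n →
      ∃ s : Set (V × V) → ℝ, (∀ c, 0 ≤ s c) ∧
        ∀ e : V × V, x e = ∑ᶠ c ∈ circuitsOf G, s c * circVec c e := by
  classical
  have hzero : ∀ x : V × V → ℝ, (∀ e, x e = 0) →
      ∃ s : Set (V × V) → ℝ, (∀ c, 0 ≤ s c) ∧
        ∀ e : V × V, x e = ∑ᶠ c ∈ circuitsOf G, s c * circVec c e := by
    intro x hx0
    exact ⟨fun _ => 0, fun _ => le_refl _, fun e => by simp [hx0 e]⟩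
  intro n
  induction n with
  | zero =>
    intro x hx hcard
    apply hzero
    intro e
    by_contra h
    have : e ∈ Finset.univ.filter fun e => x e ≠ 0 := by simp [h]
    have := Finset.card_pos.mpr ⟨e, this⟩
    omega
  | succ n ih =>
    intro x hx hcard
    by_cases hz : ∀ e, x e = 0
    · exact hzero x hz
    obtain ⟨c, hcirc, hcpos⟩ := exists_circuit_pos G x hx hz
    have hcfin : c.Finite := Set.toFinite c
    obtain ⟨l, hl0, w, hwalk, hcyc, hwinj, hcw⟩ := hcirc
    have hcne : c.Nonempty := by
      rw [hcw]
      exact ⟨_, ⟨(⟨0, hl0⟩ : Fin l), rfl⟩⟩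
    have hFne : hcfin.toFinset.Nonempty := by
      rwa [Set.Finite.toFinset_nonempty]
    set m := hcfin.toFinset.inf' hFne x with hm
    have hmpos : 0 < m := by
      rw [hm, Finset.lt_inf'_iff]
      intro e he
      exact hcpos e (hcfin.mem_toFinset.mp he)
    have hmle : ∀ e ∈ c, m ≤ x e := fun e he =>
      Finset.inf'_le x (hcfin.mem_toFinset.mpr he)
    obtain ⟨estar, hestar, hxestar⟩ := Finset.exists_mem_eq_inf' hFne x
    have hestar' : estar ∈ c := hcfin.mem_toFinset.mp hestar
    set x' : V × V → ℝ := fun e => x e - m * circVec c e with hx'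
    have hx'c : ∀ e ∈ c, x' e = x e - m := by
      intro e he
      simp [hx', circVec, Set.indicator_of_mem he]
    have hx'nc : ∀ e, e ∉ c → x' e = x e := by
      intro e he
      simp [hx', circVec, Set.indicator_of_notMem he]
    have hx'I : MemI G x' := by
      refine ⟨⟨?_, ?_⟩, ?_⟩
      · intro e
        by_cases he : e ∈ c
        · rw [hx'c e he]
          linarith [hmle e he]
        · rw [hx'nc e he]
          exact hx.1.1 e
      · intro e heE
        have hec : e ∉ c := fun he => absurd (hx.1.2 e heE) (hcpos e he).ne'
        rw [hx'nc e hec]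
        exact hx.1.2 e heE
      · intro v
        have hflow := circ_flow hl0 w hcyc hwinj v
        rw [← hcw] at hflow
        simp only [hx']
        rw [Finset.sum_sub_distrib, Finset.sum_sub_distrib, hx.2 v,
          ← Finset.mul_sum, ← Finset.mul_sum, hflow]
    have hsub : (Finset.univ.filter fun e => x' e ≠ 0) ⊆
        (Finset.univ.filter fun e => x e ≠ 0).erase estar := by
      intro e he
      simp only [Finset.mem_filter, Finset.mem_univ, true_and] at he
      rw [Finset.mem_erase]
      constructor
      · rintro rfl
        apply he
        rw [hx'c _ hestar', ← hxestar, hm, sub_self]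
      · simp only [Finset.mem_filter, Finset.mem_univ, true_and]
        intro hxe
        apply he
        by_cases hec : e ∈ c
        · exact absurd hxe (hcpos e hec).ne'
        · rw [hx'nc e hec, hxe]
    have hmemstar : estar ∈ Finset.univ.filter fun e => x e ≠ 0 := by
      simp only [Finset.mem_filter, Finset.mem_univ, true_and]
      rw [← hxestar, ← hm]
      exact hmpos.ne'
    have hcard' : (Finset.univ.filter fun e => x' e ≠ 0).card ≤ n := by
      have h1 := Finset.card_le_card hsub
      rw [Finset.card_erase_of_mem hmemstar] at h1
      omega
    obtain ⟨s', hs'nn, hs'⟩ := ih x' hx'I hcard'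
    refine ⟨fun d => s' d + if d = c then m else 0, ?_, ?_⟩
    · intro d
      have := hs'nn d
      dsimp only
      split_ifs <;> [linarith [hmpos.le]; linarith]
    · intro e
      have hCGfin : (circuitsOf G).Finite := Set.toFinite _
      have hcoe : (hCGfin.toFinset : Set (Set (V × V))) = circuitsOf G :=
        hCGfin.coe_toFinset
      have hcCG : c ∈ hCGfin.toFinset := by
        rw [hCGfin.mem_toFinset]
        exact ⟨l, hl0, w, hwalk, hcyc, hwinj, hcw⟩
      rw [← hcoe, finsum_mem_coe_finset]
      have hs'e := hs' e
      rw [← hcoe, finsum_mem_coe_finset] at hs'e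
      have hsplit : ∑ d ∈ hCGfin.toFinset, (s' d + if d = c then m else 0) * circVec d e
          = (∑ d ∈ hCGfin.toFinset, s' d * circVec d e)
            + ∑ d ∈ hCGfin.toFinset, (if d = c then m * circVec d e else 0) := by
        rw [← Finset.sum_add_distrib]
        refine Finset.sum_congr rfl fun d _ => ?_
        rw [add_mul]
        congr 1
        split_ifs <;> simp
      rw [hsplit, Finset.sum_ite_eq' hCGfin.toFinset c (fun d => m * circVec d e),
        if_pos hcCG, ← hs'e]
      simp only [hx']
      ring

/-- Every element of `ℐ(G)` is a nonnegative linear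
combination of the circuits of `G`. -/
theorem memI_nonneg_combination_of_circuits {V : Type} [Fintype V]
    (G : DirGraph V) (x : V × V → ℝ) (hx : MemI G x) :
    ∃ s : Set (V × V) → ℝ, (∀ c, 0 ≤ s c) ∧
      ∀ e : V × V, x e = ∑ᶠ c ∈ circuitsOf G, s c * circVec c e :=
  decomp_aux G _ x hx le_rfl
end
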